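/- Let A be a hereditary tree (H-tree) on the unit sphere S_X of a Banach space X, and let c > 1. Then I_w(A) = I_w(A ∩ {(x_1,...,x_n) ∈ S_X^{<ω} : (x_1,...,x_n) is c-basic}). -/

import Mathlib

open Metric Set Filter TopologicalSpace
open scoped ENNReal

noncomputable section

/-- A set `U` in the dual of `X` is weak\*-open if every point of `U` has a basic weak\*
neighborhood (determined by finitely many points of `X`) contained in `U`. -/
def IsWeakStarOpen {X : Type*} [NormedAddCommGroup X] [NormedSpace ℝ X]
    (U : Set (X →L[ℝ] ℝ)) : Prop :=
  ∀ f ∈ U, ∃ (n : ℕ) (x : Fin n → X) (δ : ℝ), 0 < δ ∧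
    ∀ g : X →L[ℝ] ℝ, (∀ i, |g (x i) - f (x i)| < δ) → g ∈ U

/-- The Szlenk derivation: remove all points of `K` lying in a relatively weak\*-open
subset of `K` of norm diameter less than `ε`. -/
def szlenkDeriv {X : Type*} [NormedAddCommGroup X] [NormedSpace ℝ X]
    (ε : ℝ) (K : Set (X →L[ℝ] ℝ)) : Set (X →L[ℝ] ℝ) :=
  {f | f ∈ K ∧ ¬ ∃ U : Set (X →L[ℝ] ℝ), IsWeakStarOpen U ∧ f ∈ U ∧
    EMetric.diam (K ∩ U) < ENNReal.ofReal ε}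

/-- The dentability derivation: remove all points of `K` lying in a weak\*-slice of `K`
of norm diameter less than `ε`. -/
def dentDeriv {X : Type*} [NormedAddCommGroup X] [NormedSpace ℝ X]
    (ε : ℝ) (K : Set (X →L[ℝ] ℝ)) : Set (X →L[ℝ] ℝ) :=
  {f | f ∈ K ∧ ¬ ∃ (x : X) (t : ℝ), t < f x ∧
    EMetric.diam {g | g ∈ K ∧ t < g x} < ENNReal.ofReal ε}

/-- Transfinite iteration of a set derivation, with intersections at limit stages. -/
def derivIter {α : Type*} (D : Set α → Set α) (K : Set α) (o : Ordinal.{0}) : Set α :=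
  Ordinal.limitRecOn o K (fun _ ih => D ih) (fun o _ ih => ⋂ (β : {β : Ordinal.{0} // β < o}), ih β.1 β.2)

open scoped Classical in
/-- The ordinal index associated with a derivation: the least ordinal at which the iterated
derived set of `K` is empty, or `⊤` (i.e. `∞`) if the derived sets are never empty. -/
def derivIndex {α : Type*} (D : Set α → Set α) (K : Set α) : WithTop Ordinal.{0} :=
  if ∃ o : Ordinal.{0}, derivIter D K o = ∅
    then ((sInf {o : Ordinal.{0} | derivIter D K o = ∅} : Ordinal.{0}) : WithTop Ordinal.{0})
    else ⊤

/-- The `ε`-Szlenk index `Sz(X,ε)`. -/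
def SzEps (X : Type*) [NormedAddCommGroup X] [NormedSpace ℝ X] (ε : ℝ) : WithTop Ordinal.{0} :=
  derivIndex (szlenkDeriv (X := X) ε) (closedBall (0 : X →L[ℝ] ℝ) 1)

/-- The Szlenk index `Sz(X) = sup_{ε > 0} Sz(X,ε)`. -/
def Sz (X : Type*) [NormedAddCommGroup X] [NormedSpace ℝ X] : WithTop Ordinal.{0} :=
  ⨆ ε : {ε : ℝ // 0 < ε}, SzEps X ε.1

/-- The `ε`-weak\*-dentability index `Dz(X,ε)`. -/
def DzEps (X : Type*) [NormedAddCommGroup X] [NormedSpace ℝ X] (ε : ℝ) : WithTop Ordinal.{0} :=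
  derivIndex (dentDeriv (X := X) ε) (closedBall (0 : X →L[ℝ] ℝ) 1)

/-- The weak\*-dentability index `Dz(X) = sup_{ε > 0} Dz(X,ε)`. -/
def Dz (X : Type*) [NormedAddCommGroup X] [NormedSpace ℝ X] : WithTop Ordinal.{0} :=
  ⨆ ε : {ε : ℝ // 0 < ε}, DzEps X ε.1

/-- `L_p(X)`: the space of `X`-valued Bochner `p`-integrable functions on `[0,1]`. -/
abbrev LpOn (X : Type*) [NormedAddCommGroup X] (p : ℝ≥0∞) :=
  MeasureTheory.Lp (α := ℝ) X p ((MeasureTheory.volume : MeasureTheory.Measure ℝ).restrict (Icc 0 1))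

/-- A normalized weakly null sequence. -/
def IsNormalizedWeaklyNull {X : Type*} [NormedAddCommGroup X] [NormedSpace ℝ X] (y : ℕ → X) : Prop :=
  (∀ n, ‖y n‖ = 1) ∧ ∀ f : X →L[ℝ] ℝ, Tendsto (fun n => f (y n)) atTop (nhds 0)

/-- A tree on the unit sphere of `X`: a nonempty set of finite sequences of norm one vectors,
closed under taking initial segments. -/
def IsTreeOnSphere {X : Type*} [NormedAddCommGroup X] (A : Set (List X)) : Prop :=
  A.Nonempty ∧ (∀ l ∈ A, ∀ x ∈ l, ‖x‖ = 1) ∧ ∀ l ∈ A, ∀ l' : List X, l' <+: l → l' ∈ A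

/-- A hereditary tree (H-tree) on the unit sphere of `X`: a tree containing all
subsequences of each of its members. -/
def IsHTree {X : Type*} [NormedAddCommGroup X] (A : Set (List X)) : Prop :=
  IsTreeOnSphere A ∧ ∀ l ∈ A, ∀ l' : List X, List.Sublist l' l → l' ∈ A

/-- The weak derivative of a tree: all members which admit extensions inside the tree along a
normalized weakly null sequence, together with all initial segments of such members. -/
def weakDeriv {X : Type*} [NormedAddCommGroup X] [NormedSpace ℝ X] (A : Set (List X)) :
    Set (List X) :=
  {l | ∃ m ∈ A, l <+: m ∧ ∃ y : ℕ → X, IsNormalizedWeaklyNull y ∧ ∀ n, m ++ [y n] ∈ A}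

/-- The weak index `I_w` of a tree on the unit sphere. -/
def Iw {X : Type*} [NormedAddCommGroup X] [NormedSpace ℝ X] (A : Set (List X)) :
    WithTop Ordinal.{0} :=
  derivIndex weakDeriv A

/-- The tree `F_ρ^X` of finite normalized sequences which `ρ`-dominate the positive part of
the `ℓ_1` norm. -/
def FTree (X : Type*) [NormedAddCommGroup X] [NormedSpace ℝ X] (ρ : ℝ) : Set (List X) :=
  {l | (∀ x ∈ l, ‖x‖ = 1) ∧ ∀ a : ℕ → ℝ, (∀ i, 0 ≤ a i) →
    ρ * (∑ i ∈ Finset.range l.length, a i) ≤ ‖∑ i ∈ Finset.range l.length, a i • l.getD i 0‖}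

/-- A finite sequence is `c`-basic if partial sums of linear combinations are dominated,
with constant `c`, by the full linear combination. -/
def IsCBasicSeq {X : Type*} [NormedAddCommGroup X] [NormedSpace ℝ X] (c : ℝ) (l : List X) : Prop :=
  ∀ a : ℕ → ℝ, ∀ m ≤ l.length,
    ‖∑ i ∈ Finset.range m, a i • l.getD i 0‖ ≤
      c * ‖∑ i ∈ Finset.range l.length, a i • l.getD i 0‖

/-- An order isomorphism between trees: injective on `A`, mapping `A` into `B`, and preserving
and reflecting the strict initial-segment order. -/
def IsTreeOrderIso {X Y : Type*} (A : Set (List X)) (B : Set (List Y))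
    (Ψ : List X → List Y) : Prop :=
  (∀ l ∈ A, Ψ l ∈ B) ∧ Set.InjOn Ψ A ∧
    ∀ l ∈ A, ∀ m ∈ A, ((Ψ l <+: Ψ m ∧ Ψ l ≠ Ψ m) ↔ (l <+: m ∧ l ≠ m))

/-- Condition (2.1.1): `Ψ` maps weakly null extensions in `A` to weakly null extensions. -/
def MapsWeaklyNullExtensions {X Y : Type*} [NormedAddCommGroup X] [NormedSpace ℝ X]
    [NormedAddCommGroup Y] [NormedSpace ℝ Y] (A : Set (List X)) (Ψ : List X → List Y) : Prop :=
  ∀ l ∈ A, ∀ x : ℕ → X, IsNormalizedWeaklyNull x → (∀ k, l ++ [x k] ∈ A) →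
    ∃ y : ℕ → Y, IsNormalizedWeaklyNull y ∧ ∀ k, Ψ (l ++ [x k]) = Ψ l ++ [y k]

/-- `C([0,β])`: the space of continuous functions on the ordinal interval `[0,β]`. -/
abbrev COrd (β : Ordinal.{0}) := BoundedContinuousFunction (Iic β) ℝ

section AuxProofs

lemma mazur {X : Type} [NormedAddCommGroup X] [NormedSpace ℝ X]
    (v : Set X) (hv : v.Finite) (y : ℕ → X) (hy : IsNormalizedWeaklyNull y)
    {ε : ℝ} (hε : 0 < ε) :
    ∃ N : ℕ, ∀ i ≥ N, ∀ e ∈ Submodule.span ℝ v, ∀ b : ℝ,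
      ‖e‖ ≤ (1 + ε) * ‖e + b • y i‖ := by
  classical
  set E := Submodule.span ℝ v with hE
  haveI : FiniteDimensional ℝ E := FiniteDimensional.span_of_finite ℝ hv
  set δ : ℝ := ε / (3 * (1 + ε)) with hδdef
  have hε1 : (0:ℝ) < 1 + ε := by linarith
  have hδ : 0 < δ := by positivity
  have h3δ : 3 * δ = ε / (1 + ε) := by
    rw [hδdef]; field_simp
  have h3δ' : (1 + ε) * (1 - 3 * δ) = 1 := by
    rw [h3δ]; field_simp; ring
  set S : Set X := Subtype.val '' (sphere (0 : E) 1) with hS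
  have hScompact : IsCompact S := (isCompact_sphere (0:E) 1).image continuous_subtype_val
  obtain ⟨t, hts, htfin, hcover⟩ := hScompact.finite_cover_balls hδ
  have hnorm1 : ∀ x ∈ t, ‖x‖ = 1 := by
    intro x hx
    obtain ⟨u, hu, rfl⟩ := hts hx
    simpa [mem_sphere_iff_norm] using hu
  have hg : ∀ x ∈ t, ∃ g : X →L[ℝ] ℝ, ‖g‖ = 1 ∧ g x = ‖x‖ := by
    intro x hx
    refine exists_dual_vector ℝ x ?_
    intro h0
    have := hnorm1 x hx
    rw [h0] at this; simp at this
  choose! g hgnorm hgval using hg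
  have hev : ∀ᶠ i in atTop, ∀ x ∈ t, |g x (y i)| < δ := by
    refine (eventually_all_finite htfin).2 fun x hx => ?_
    have h1 : Tendsto (fun n => |g x (y n)|) atTop (nhds 0) := by
      simpa using (hy.2 (g x)).abs
    exact (h1.eventually_lt_const hδ).mono (fun i hi => by simpa using hi)
  obtain ⟨N, hN⟩ := eventually_atTop.1 hev
  refine ⟨N, fun i hi e he b => ?_⟩
  by_cases he0 : e = 0
  · simp [he0]; positivity
  · have hre : 0 < ‖e‖ := norm_pos_iff.2 he0
    set u : X := ‖e‖⁻¹ • e with hu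
    have hunorm : ‖u‖ = 1 := by
      rw [hu, norm_smul]
      simp [abs_of_pos (inv_pos.2 hre), inv_mul_cancel₀ hre.ne']
    have huE : u ∈ E := E.smul_mem _ he
    have huS : u ∈ S := ⟨⟨u, huE⟩, by simp [mem_sphere_iff_norm, hunorm], rfl⟩
    obtain ⟨x, hx, hux⟩ := mem_iUnion₂.1 (hcover huS)
    have hux' : ‖u - x‖ < δ := by
      rw [mem_ball, dist_eq_norm] at hux; exact hux
    set b' : ℝ := ‖e‖⁻¹ * b with hb'
    have key : 1 ≤ (1 + ε) * ‖u + b' • y i‖ := by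
      by_cases hbc : |b'| ≤ 2
      · have h1 : g x (u + b' • y i) = g x x + g x (u - x) + b' * (g x (y i)) := by
          simp only [map_add, map_sub, map_smul, smul_eq_mul]; ring
        have h2 : |g x (u - x)| ≤ ‖u - x‖ := by
          calc |g x (u - x)| ≤ ‖g x‖ * ‖u - x‖ := (g x).le_opNorm _
          _ = ‖u - x‖ := by rw [hgnorm x hx, one_mul]
        have h3 : |g x (y i)| < δ := hN i hi x hx
        have h4 : g x x = 1 := by rw [hgval x hx, hnorm1 x hx]
        have h5 : g x (u + b' • y i) ≥ 1 - 3 * δ := by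
          rw [h1, h4]
          have := abs_le.1 hbc
          have h6 : |b' * g x (y i)| ≤ 2 * δ := by
            rw [abs_mul]
            have := h3.le
            nlinarith [abs_nonneg b', abs_nonneg (g x (y i))]
          have := abs_le.1 h6
          have := abs_le.1 h2
          linarith
        have h7 : g x (u + b' • y i) ≤ ‖u + b' • y i‖ := by
          calc g x (u + b' • y i) ≤ |g x (u + b' • y i)| := le_abs_self _
          _ ≤ ‖g x‖ * ‖u + b' • y i‖ := (g x).le_opNorm _
          _ = ‖u + b' • y i‖ := by rw [hgnorm x hx, one_mul]
        nlinarith [norm_nonneg (u + b' • y i)]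
      · push_neg at hbc
        have h8 : ‖u + b' • y i‖ ≥ |b'| - 1 := by
          calc ‖u + b' • y i‖ ≥ ‖b' • y i‖ - ‖u‖ := by
                have := norm_sub_norm_le (b' • y i) (-u)
                simp only [norm_neg] at this
                calc ‖b' • y i‖ - ‖u‖ ≤ ‖b' • y i - -u‖ := this
                _ = ‖u + b' • y i‖ := by rw [sub_neg_eq_add, add_comm]
          _ = |b'| - 1 := by rw [norm_smul, hy.1 i, hunorm]; simp [Real.norm_eq_abs]
        nlinarith
    have heq : e + b • y i = ‖e‖ • (u + b' • y i) := by
      rw [hu, hb', smul_add, smul_smul, smul_smul]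
      congr 1
      · rw [mul_inv_cancel₀ hre.ne', one_smul]
      · congr 1; field_simp
    have hnormeq : ‖e + b • y i‖ = ‖e‖ * ‖u + b' • y i‖ := by
      rw [heq, norm_smul, Real.norm_eq_abs, abs_of_pos hre]
    rw [hnormeq]
    nlinarith

lemma derivIter_zero' {α : Type*} (D : Set α → Set α) (K : Set α) : derivIter D K 0 = K :=
  Ordinal.limitRecOn_zero _ _ _

lemma derivIter_succ' {α : Type*} (D : Set α → Set α) (K : Set α) (o : Ordinal.{0}) :
    derivIter D K (Order.succ o) = D (derivIter D K o) :=
  Ordinal.limitRecOn_succ _ _ _ _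

lemma derivIter_limit' {α : Type*} (D : Set α → Set α) (K : Set α) {o : Ordinal.{0}}
    (ho : Order.IsSuccLimit o) :
    derivIter D K o = ⋂ (β : {β : Ordinal.{0} // β < o}), derivIter D K β.1 :=
  Ordinal.limitRecOn_limit _ _ _ _ ho

lemma derivIter_mono' {α : Type*} {D : Set α → Set α}
    (hD : ∀ s t : Set α, s ⊆ t → D s ⊆ D t) {K K' : Set α} (h : K ⊆ K') (o : Ordinal.{0}) :
    derivIter D K o ⊆ derivIter D K' o := by
  induction o using Ordinal.limitRecOn with
  | zero => rw [derivIter_zero', derivIter_zero']; exact h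
  | add_one o ih => rw [Ordinal.add_one_eq_succ, derivIter_succ', derivIter_succ']; exact hD _ _ ih
  | limit o ho ih =>
      rw [derivIter_limit' _ _ ho, derivIter_limit' _ _ ho]
      exact fun x hx => Set.mem_iInter.2 fun β => ih β.1 β.2 (Set.mem_iInter.1 hx β)

lemma weakDeriv_mono' {X : Type*} [NormedAddCommGroup X] [NormedSpace ℝ X]
    {A B : Set (List X)} (h : A ⊆ B) : weakDeriv A ⊆ weakDeriv B := by
  rintro l ⟨m, hm, hlm, y, hy, hext⟩
  exact ⟨m, h hm, hlm, y, hy, fun n => h (hext n)⟩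

def Hered {X : Type*} (B : Set (List X)) : Prop :=
  ∀ l ∈ B, ∀ l' : List X, l'.Sublist l → l' ∈ B

lemma Hered.weakDeriv {X : Type*} [NormedAddCommGroup X] [NormedSpace ℝ X]
    {B : Set (List X)} (hB : Hered B) : Hered (_root_.weakDeriv B) := by
  rintro l ⟨m, hm, hlm, y, hy, hext⟩ l' hl'
  have hl'm : l'.Sublist m := hl'.trans hlm.sublist
  exact ⟨l', hB m hm l' hl'm, List.prefix_refl _, y, hy,
    fun n => hB (m ++ [y n]) (hext n) _ (hl'm.append (List.Sublist.refl _))⟩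

lemma Hered.derivIter {X : Type*} [NormedAddCommGroup X] [NormedSpace ℝ X]
    {A : Set (List X)} (hA : Hered A) (o : Ordinal.{0}) :
    Hered (_root_.derivIter _root_.weakDeriv A o) := by
  induction o using Ordinal.limitRecOn with
  | zero => rw [derivIter_zero']; exact hA
  | add_one o ih => rw [Ordinal.add_one_eq_succ, derivIter_succ']; exact ih.weakDeriv
  | limit o ho ih =>
      rw [derivIter_limit' _ _ ho]
      exact fun l hl l' hl'l => Set.mem_iInter.2 fun β =>
        ih β.1 β.2 l (Set.mem_iInter.1 hl β) l' hl'l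

lemma IsCBasicSeq.mono {X : Type*} [NormedAddCommGroup X] [NormedSpace ℝ X]
    {c c' : ℝ} {l : List X} (h : IsCBasicSeq c l) (hcc' : c ≤ c') : IsCBasicSeq c' l := by
  intro a m hm
  exact (h a m hm).trans (mul_le_mul_of_nonneg_right hcc' (norm_nonneg _))

lemma isCBasicSeq_nil {X : Type*} [NormedAddCommGroup X] [NormedSpace ℝ X] (c : ℝ) :
    IsCBasicSeq c ([] : List X) := by
  intro a m hm
  simp only [List.length_nil, Nat.le_zero] at hm
  subst hm
  simp

lemma getD_mem_span {X : Type*} [NormedAddCommGroup X] [NormedSpace ℝ X]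
    (l : List X) (a : ℕ → ℝ) {m : ℕ} (hm : m ≤ l.length) :
    (∑ i ∈ Finset.range m, a i • l.getD i 0) ∈ Submodule.span ℝ {x | x ∈ l} := by
  refine Submodule.sum_mem _ fun i hi => Submodule.smul_mem _ _ (Submodule.subset_span ?_)
  have hil : i < l.length := lt_of_lt_of_le (Finset.mem_range.1 hi) hm
  rw [List.getD_eq_getElem l 0 hil]
  exact List.getElem_mem hil

lemma IsCBasicSeq.append {X : Type*} [NormedAddCommGroup X] [NormedSpace ℝ X]
    {K K' ε : ℝ} (hK1 : 1 ≤ K) (hK'1 : 1 ≤ K') {l : List X} (hl : IsCBasicSeq K l) {z : X}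
    (hε : 0 ≤ ε) (hKK' : K * (1 + ε) ≤ K')
    (hz : ∀ e ∈ Submodule.span ℝ {x | x ∈ l}, ∀ b : ℝ, ‖e‖ ≤ (1 + ε) * ‖e + b • z‖) :
    IsCBasicSeq K' (l ++ [z]) := by
  intro a m hm
  have hlen : (l ++ [z]).length = l.length + 1 := by simp
  rw [hlen] at hm ⊢
  have hgetD : ∀ i < l.length, (l ++ [z]).getD i 0 = l.getD i 0 := by
    intro i hi
    rw [List.getD_append _ _ _ _ hi]
  have hgetDn : (l ++ [z]).getD l.length 0 = z := by
    rw [List.getD_append_right _ _ _ _ (le_refl _)]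
    simp
  have hF : (∑ i ∈ Finset.range (l.length + 1), a i • (l ++ [z]).getD i 0)
      = (∑ i ∈ Finset.range l.length, a i • l.getD i 0) + a l.length • z := by
    rw [Finset.sum_range_succ, hgetDn]
    congr 1
    exact Finset.sum_congr rfl fun i hi => by rw [hgetD i (Finset.mem_range.1 hi)]
  set Sv := ∑ i ∈ Finset.range l.length, a i • l.getD i 0 with hSv
  set F := (∑ i ∈ Finset.range (l.length + 1), a i • (l ++ [z]).getD i 0) with hFdef
  have hSmem : Sv ∈ Submodule.span ℝ {x | x ∈ l} := getD_mem_span l a (le_refl _)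
  have hSF : ‖Sv‖ ≤ (1 + ε) * ‖F‖ := by
    rw [hF]; exact hz Sv hSmem (a l.length)
  by_cases hmn : m ≤ l.length
  · have hpart : (∑ i ∈ Finset.range m, a i • (l ++ [z]).getD i 0)
        = ∑ i ∈ Finset.range m, a i • l.getD i 0 := by
      exact Finset.sum_congr rfl fun i hi =>
        by rw [hgetD i (lt_of_lt_of_le (Finset.mem_range.1 hi) hmn)]
    rw [hpart]
    calc ‖∑ i ∈ Finset.range m, a i • l.getD i 0‖ ≤ K * ‖Sv‖ := hl a m hmn
    _ ≤ K * ((1 + ε) * ‖F‖) := by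
        exact mul_le_mul_of_nonneg_left hSF (by linarith)
    _ = K * (1 + ε) * ‖F‖ := by ring
    _ ≤ K' * ‖F‖ := mul_le_mul_of_nonneg_right hKK' (norm_nonneg _)
  · have hmn' : m = l.length + 1 := le_antisymm hm (by omega)
    subst hmn'
    calc ‖F‖ ≤ 1 * ‖F‖ := by rw [one_mul]
    _ ≤ K' * ‖F‖ := mul_le_mul_of_nonneg_right hK'1 (norm_nonneg _)

lemma one_le_Kc {c : ℝ} (hc : 1 < c) (n : ℕ) : 1 ≤ c - (c - 1) / 2 ^ n := by
  have h1 : (1:ℝ) ≤ 2 ^ n := one_le_pow₀ (by norm_num)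
  have h2 : (c - 1) / 2 ^ n ≤ c - 1 := div_le_self (by linarith) h1
  linarith

lemma Kc_le_c {c : ℝ} (hc : 1 < c) (n : ℕ) : c - (c - 1) / 2 ^ n ≤ c := by
  have : (0:ℝ) ≤ (c - 1) / 2 ^ n := div_nonneg (by linarith) (by positivity)
  linarith

lemma Kc_half (c : ℝ) (n : ℕ) : (c - 1) / 2 ^ (n + 1) = ((c - 1) / 2 ^ n) / 2 := by
  rw [div_div, ← pow_succ]

lemma Kc_lt {c : ℝ} (hc : 1 < c) (n : ℕ) :
    c - (c - 1) / 2 ^ n < c - (c - 1) / 2 ^ (n + 1) := by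
  have hp : 0 < (c - 1) / 2 ^ n := div_pos (by linarith) (by positivity)
  rw [Kc_half]; linarith

lemma main_ind {X : Type} [NormedAddCommGroup X] [NormedSpace ℝ X]
    {A : Set (List X)} (hH : Hered A) {c : ℝ} (hc : 1 < c) (o : Ordinal.{0}) :
    ∀ l ∈ derivIter weakDeriv A o, IsCBasicSeq (c - (c - 1) / 2 ^ l.length) l →
      l ∈ derivIter weakDeriv (A ∩ {l' | IsCBasicSeq c l'}) o := by
  induction o using Ordinal.limitRecOn with
  | zero =>
      intro l hl hbasic
      rw [derivIter_zero'] at hl ⊢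
      exact ⟨hl, hbasic.mono (Kc_le_c hc _)⟩
  | add_one o ih =>
      rw [Ordinal.add_one_eq_succ]
      intro l hl hbasic
      rw [derivIter_succ'] at hl ⊢
      obtain ⟨m, hm, hlm, y, hy, hext⟩ := hl
      have hHo := hH.derivIter o
      have hlAo : l ∈ derivIter weakDeriv A o := hHo m hm l hlm.sublist
      have hextl : ∀ k, l ++ [y k] ∈ derivIter weakDeriv A o := fun k =>
        hHo _ (hext k) _ (hlm.sublist.append (List.Sublist.refl _))
      set n := l.length with hn
      set Kn := c - (c - 1) / 2 ^ n with hKn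
      set Kn1 := c - (c - 1) / 2 ^ (n + 1) with hKn1
      set ε := (Kn1 - Kn) / c with hεdef
      have hcpos : (0:ℝ) < c := by linarith
      have hKle : Kn < Kn1 := Kc_lt hc n
      have hεnonneg : 0 ≤ ε := div_nonneg (by linarith) hcpos.le
      have hcε : c * ε = Kn1 - Kn := by
        rw [hεdef]; field_simp
      have hKK' : Kn * (1 + ε) ≤ Kn1 := by
        have h1 : Kn * ε ≤ c * ε := mul_le_mul_of_nonneg_right (Kc_le_c hc n) hεnonneg
        nlinarith
      have hεpos : 0 < ε := div_pos (by linarith) hcpos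
      obtain ⟨N, hN⟩ := mazur {x | x ∈ l} l.finite_toSet y hy hεpos
      refine ⟨l, ih l hlAo hbasic, List.prefix_refl _, fun k => y (k + N),
        ⟨fun k => hy.1 _, fun f => (hy.2 f).comp (tendsto_add_atTop_nat N)⟩, fun k => ?_⟩
      apply ih
      · exact hextl (k + N)
      · have hlen : (l ++ [y (k + N)]).length = n + 1 := by simp [hn]
        rw [hlen]
        exact hbasic.append (one_le_Kc hc n) (one_le_Kc hc (n+1)) hεnonneg hKK'
          (fun e he b => hN (k + N) (by omega) e he b)
  | limit o ho ih =>
      intro l hl hbasic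
      rw [derivIter_limit' _ _ ho] at hl ⊢
      exact Set.mem_iInter.2 fun β => ih β.1 β.2 l (Set.mem_iInter.1 hl β) hbasic

end AuxProofs

/-- **Proposition 2.3.** For a hereditary tree `A` on the unit sphere of `X` and `c > 1`,
the weak index of `A` equals the weak index of its subset of `c`-basic sequences. -/
theorem weak_index_eq_basic_restriction
    (X : Type) [NormedAddCommGroup X] [NormedSpace ℝ X] [CompleteSpace X]
    (A : Set (List X)) (hA : IsHTree A) (c : ℝ) (hc : 1 < c) :
    Iw A = Iw (A ∩ {l : List X | IsCBasicSeq c l}) := by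
  classical
  set B := A ∩ {l : List X | IsCBasicSeq c l} with hB
  have key : ∀ o : Ordinal.{0},
      (derivIter weakDeriv A o = ∅ ↔ derivIter weakDeriv B o = ∅) := by
    intro o
    constructor
    · intro h
      have hsub : derivIter weakDeriv B o ⊆ derivIter weakDeriv A o :=
        derivIter_mono' (fun s t hst => weakDeriv_mono' hst) Set.inter_subset_left o
      rw [h] at hsub
      exact Set.subset_empty_iff.1 hsub
    · intro h
      by_contra hne
      obtain ⟨l, hl⟩ := Set.nonempty_iff_ne_empty.2 hne
      have hH : Hered A := hA.2
      have hnil : ([] : List X) ∈ derivIter weakDeriv A o :=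
        hH.derivIter o l hl [] (List.nil_sublist l)
      have hmem : ([] : List X) ∈ derivIter weakDeriv B o := by
        have := main_ind hH hc o [] hnil (by simpa using isCBasicSeq_nil (X := X) 1)
        exact this
      rw [h] at hmem
      exact hmem
  have hexiff : (∃ o : Ordinal.{0}, derivIter weakDeriv A o = ∅)
      ↔ (∃ o : Ordinal.{0}, derivIter weakDeriv B o = ∅) := exists_congr key
  have hset : {o : Ordinal.{0} | derivIter weakDeriv A o = ∅}
      = {o : Ordinal.{0} | derivIter weakDeriv B o = ∅} := Set.ext key
  unfold Iw derivIndex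
  exact if_congr hexiff (by rw [hset]) rfl

end
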